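/- (Quasideterminant solution of noncommutative linear systems.) Let R be a (possibly noncommutative) ring with 1, n ≥ 2, and A = (a_{i,j}) an n×n matrix over R. For 1 ≤ i, j ≤ n, let A^{i,j} be the (n−1)×(n−1) matrix obtained from A by deleting row i and column j, r_i^j the i-th row of A with the j-th entry deleted, and c_j^i the j-th column of A with the i-th entry deleted, and define the quasideterminant |A|_{i,j} = a_{i,j} − r_i^j (A^{i,j})^{-1} c_j^i. Assume every A^{i,j} is invertible over R and every |A|_{i,j} is invertible in R. Then A is invertible over R, and for any ξ_1,…,ξ_n ∈ R the system Σ_{j=1}^n a_{i,j} x_j = ξ_i (1 ≤ i ≤ n) has the unique solution x_i = Σ_{j=1}^n |A|_{j,i}^{-1} ξ_j. -/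

import Mathlib

open Matrix

private lemma blockInv19 {R : Type*} [Ring R] {m n : Type*} [Fintype m] [Fintype n]
    [DecidableEq m] [DecidableEq n]
    (A : Matrix m m R) (B : Matrix m n R) (C : Matrix n m R) (D : Matrix n n R)
    (E : Matrix m m R) (s : Matrix n n R)
    (h1 : A * E = 1) (h2 : E * A = 1)
    (h3 : (D - C * E * B) * s = 1) (h4 : s * (D - C * E * B) = 1) :
    fromBlocks A B C D * fromBlocks (E + E*B*s*C*E) (-(E*B*s)) (-(s*C*E)) s = 1 ∧
    fromBlocks (E + E*B*s*C*E) (-(E*B*s)) (-(s*C*E)) s * fromBlocks A B C D = 1 := by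
  rw [Matrix.sub_mul] at h3
  rw [Matrix.mul_sub] at h4
  simp only [Matrix.mul_assoc] at h4
  have hDs : D * s = 1 + C * E * B * s := by rw [← h3]; abel
  have hsD : s * D = 1 + s * (C * (E * B)) := by rw [← h4]; abel
  have b11 : A * (E + E*B*s*C*E) + B * -(s*C*E) = 1 := by
    simp only [Matrix.mul_add, Matrix.mul_neg, ← Matrix.mul_assoc, h1, Matrix.one_mul]
    abel
  have b12 : A * -(E*B*s) + B * s = 0 := by
    simp only [Matrix.mul_neg, ← Matrix.mul_assoc, h1, Matrix.one_mul]
    abel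
  have b21 : C * (E + E*B*s*C*E) + D * -(s*C*E) = 0 := by
    simp only [Matrix.mul_add, Matrix.mul_neg, ← Matrix.mul_assoc, hDs, Matrix.add_mul,
      Matrix.one_mul]
    abel
  have b22 : C * -(E*B*s) + D * s = 1 := by
    simp only [Matrix.mul_neg, ← Matrix.mul_assoc, hDs]
    abel
  have c11 : (E + E*B*s*C*E) * A + -(E*B*s) * C = 1 := by
    simp only [Matrix.add_mul, Matrix.neg_mul, Matrix.mul_assoc, h2, Matrix.mul_one]
    abel
  have c12 : (E + E*B*s*C*E) * B + -(E*B*s) * D = 0 := by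
    simp only [Matrix.add_mul, Matrix.neg_mul, Matrix.mul_assoc, hsD, Matrix.mul_add,
      Matrix.mul_one]
    abel
  have c21 : -(s*C*E) * A + s * C = 0 := by
    simp only [Matrix.neg_mul, Matrix.mul_assoc, h2, Matrix.mul_one]
    abel
  have c22 : -(s*C*E) * B + s * D = 1 := by
    simp only [Matrix.neg_mul, Matrix.mul_assoc, hsD, Matrix.mul_add, Matrix.mul_one]
    abel
  constructor
  · rw [fromBlocks_multiply, b11, b12, b21, b22, fromBlocks_one]
  · rw [fromBlocks_multiply, c11, c12, c21, c22, fromBlocks_one]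


/-- **Quasideterminant solution of noncommutative linear systems.**
`R` a possibly noncommutative ring with 1, `A` an `N × N` matrix over `R` with `N = n + 1 ≥ 2`.
For each position `(i,j)` let `A^{i,j}` be the submatrix obtained by deleting row `i` and
column `j`, `r_i^j` the `i`-th row with the `j`-th entry deleted, `c_j^i` the `j`-th column
with the `i`-th entry deleted, and `|A|_{i,j} = a_{i,j} − r_i^j (A^{i,j})⁻¹ c_j^i` the
quasideterminant.  Assume every `A^{i,j}` is invertible over `R` (with two-sided inverse
`Ainv i j`) and every `|A|_{i,j}` is invertible in `R` (with two-sided inverse `q i j`).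
Then `A` is invertible over `R`, and for any `ξ`, the system `Σ_j a_{i,j} x_j = ξ_i`
has the unique solution `x_i = Σ_j |A|_{j,i}⁻¹ ξ_j`. -/
theorem stmt19 {R : Type*} [Ring R] (n : ℕ) (hn : 1 ≤ n)
    (A : Matrix (Fin (n + 1)) (Fin (n + 1)) R)
    (Ainv : Fin (n + 1) → Fin (n + 1) → Matrix (Fin n) (Fin n) R)
    (hAinv1 : ∀ i j, A.submatrix i.succAbove j.succAbove * Ainv i j = 1)
    (hAinv2 : ∀ i j, Ainv i j * A.submatrix i.succAbove j.succAbove = 1)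
    (q : Fin (n + 1) → Fin (n + 1) → R)
    (hq1 : ∀ i j, (A i j - ((fun k => A i (j.succAbove k)) ᵥ* Ainv i j)
        ⬝ᵥ (fun k => A (i.succAbove k) j)) * q i j = 1)
    (hq2 : ∀ i j, q i j * (A i j - ((fun k => A i (j.succAbove k)) ᵥ* Ainv i j)
        ⬝ᵥ (fun k => A (i.succAbove k) j)) = 1) :
    IsUnit A ∧
    ∀ ξ x : Fin (n + 1) → R,
      ((∀ i, ∑ j, A i j * x j = ξ i) ↔ x = fun i => ∑ j, q j i * ξ j) := by
  -- for each (i,j), an explicit two-sided inverse of A whose (j,i) entry is q i j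
  have key : ∀ i j : Fin (n + 1), ∃ Bm : Matrix (Fin (n + 1)) (Fin (n + 1)) R,
      A * Bm = 1 ∧ Bm * A = 1 ∧ Bm j i = q i j := by
    intro i j
    set e1 : Fin n ⊕ Unit ≃ Fin (n + 1) :=
      ((finSuccEquiv' i).trans (Equiv.optionEquivSumPUnit _)).symm with he1
    set e2 : Fin n ⊕ Unit ≃ Fin (n + 1) :=
      ((finSuccEquiv' j).trans (Equiv.optionEquivSumPUnit _)).symm with he2
    have he1l : ∀ k, e1 (Sum.inl k) = i.succAbove k := by
      intro k
      simp [he1, Equiv.symm_trans_apply]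
    have he1r : ∀ u, e1 (Sum.inr u) = i := by
      intro u
      simp [he1, Equiv.symm_trans_apply]
    have he2l : ∀ k, e2 (Sum.inl k) = j.succAbove k := by
      intro k
      simp [he2, Equiv.symm_trans_apply]
    have he2r : ∀ u, e2 (Sum.inr u) = j := by
      intro u
      simp [he2, Equiv.symm_trans_apply]
    set A' : Matrix (Fin n) (Fin n) R := A.submatrix i.succAbove j.succAbove with hA'
    set Bc : Matrix (Fin n) Unit R := fun k _ => A (i.succAbove k) j with hBc
    set Cr : Matrix Unit (Fin n) R := fun _ k => A i (j.succAbove k) with hCr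
    set Dm : Matrix Unit Unit R := fun _ _ => A i j with hDm
    set s : Matrix Unit Unit R := fun _ _ => q i j with hs
    have hN : A.submatrix e1 e2 = fromBlocks A' Bc Cr Dm := by
      ext a b
      cases a with
      | inl k => cases b with
        | inl l => simp [he1l, he2l, hA']
        | inr v => rw [fromBlocks_apply₁₂]; simp [he1l, he2r, hBc]
      | inr u => cases b with
        | inl l => rw [fromBlocks_apply₂₁]; simp [he1r, he2l, hCr]
        | inr v => rw [fromBlocks_apply₂₂]; simp [he1r, he2r, hDm]
    have hCEB : ∀ u v : Unit, (Cr * Ainv i j * Bc) u v =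
        ((fun k => A i (j.succAbove k)) ᵥ* Ainv i j) ⬝ᵥ (fun k => A (i.succAbove k) j) := by
      intro u v
      simp only [Matrix.mul_apply]
      simp [hCr, hBc, vecMul, dotProduct, Finset.sum_mul, Finset.mul_sum]
    have h3 : (Dm - Cr * Ainv i j * Bc) * s = 1 := by
      ext u v
      simp only [Matrix.mul_apply, Matrix.sub_apply]
      simp only [hs]
      rw [Finset.sum_eq_single () (by simp) (by simp)]
      have := hq1 i j
      simp only [hCEB, hDm]
      rw [show (1 : Matrix Unit Unit R) u v = 1 by simp [Matrix.one_apply]]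
      exact this
    have h4 : s * (Dm - Cr * Ainv i j * Bc) = 1 := by
      ext u v
      simp only [Matrix.mul_apply, Matrix.sub_apply]
      simp only [hs]
      rw [Finset.sum_eq_single () (by simp) (by simp)]
      have := hq2 i j
      simp only [hCEB, hDm]
      rw [show (1 : Matrix Unit Unit R) u v = 1 by simp [Matrix.one_apply]]
      exact this
    obtain ⟨hP1, hP2⟩ := blockInv19 A' Bc Cr Dm (Ainv i j) s (hAinv1 i j) (hAinv2 i j) h3 h4
    set N' : Matrix (Fin n ⊕ Unit) (Fin n ⊕ Unit) R :=
      fromBlocks (Ainv i j + Ainv i j*Bc*s*Cr*Ainv i j) (-(Ainv i j*Bc*s)) (-(s*Cr*Ainv i j)) s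
      with hN'
    refine ⟨N'.submatrix e2.symm e1.symm, ?_, ?_, ?_⟩
    · have hA : A = (A.submatrix e1 e2).submatrix e1.symm e2.symm := by
        ext a b; simp
      rw [hA, hN, Matrix.submatrix_mul_equiv, hP1, Matrix.submatrix_one_equiv]
    · have hA : A = (A.submatrix e1 e2).submatrix e1.symm e2.symm := by
        ext a b; simp
      rw [hA, hN, Matrix.submatrix_mul_equiv, hP2, Matrix.submatrix_one_equiv]
    · have h2j : e2.symm j = Sum.inr () := by
        rw [Equiv.symm_apply_eq, he2r]
      have h1i : e1.symm i = Sum.inr () := by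
        rw [Equiv.symm_apply_eq, he1r]
      simp [Matrix.submatrix_apply, h2j, h1i, hN', fromBlocks, hs]
  obtain ⟨B, hB1, hB2, -⟩ := key 0 0
  have hBq : ∀ i j, B j i = q i j := by
    intro i j
    obtain ⟨B', h1', h2', h3'⟩ := key i j
    have hBB : B' = B := by
      calc B' = B' * (A * B) := by rw [hB1, Matrix.mul_one]
        _ = (B' * A) * B := by rw [Matrix.mul_assoc]
        _ = B := by rw [h2', Matrix.one_mul]
    rw [← h3', hBB]
  refine ⟨⟨⟨A, B, hB1, hB2⟩, rfl⟩, ?_⟩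
  intro ξ x
  constructor
  · intro h
    have hAx : A *ᵥ x = ξ := funext fun i => by
      simpa [Matrix.mulVec, dotProduct] using h i
    have hx : x = B *ᵥ ξ := by
      rw [← hAx, Matrix.mulVec_mulVec, hB2, Matrix.one_mulVec]
    funext i
    rw [hx]
    simp [Matrix.mulVec, dotProduct]
    exact Finset.sum_congr rfl fun j _ => by rw [hBq j i]
  · intro h i
    have hx : x = B *ᵥ ξ := by
      rw [h]; funext i; simp [Matrix.mulVec, dotProduct]
      exact Finset.sum_congr rfl fun j _ => by rw [hBq j i]
    have : A *ᵥ x = ξ := by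
      rw [hx, Matrix.mulVec_mulVec, hB1, Matrix.one_mulVec]
    calc ∑ j, A i j * x j = (A *ᵥ x) i := by simp [Matrix.mulVec, dotProduct]
      _ = ξ i := by rw [this]
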